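/- On the complex Heisenberg Lie algebra with (1,0)-coframe α¹, α², α³ satisfying dα¹ = dα² = 0 and dα³ = α¹ ∧ α², every left-invariant Hermitian fundamental form ω (a positive (1,1)-form on the Lie algebra) satisfies d(ω²) = 0, i.e. every left-invariant Hermitian metric on the Iwasawa manifold is balanced. -/
import Mathlib


open scoped ComplexOrder

/-- on the complex Heisenberg Lie algebra with (1,0)-coframe `α¹,α²,α³`
(and conjugates `ᾱ¹,ᾱ²,ᾱ³`, here `β`) satisfying `dα¹ = dα² = 0`, `dα³ = α¹∧α²`, every
left-invariant Hermitian fundamental form `ω = i Σ g_{jk̄} α^j∧ᾱ^k` (with `g` a positive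
definite Hermitian matrix) satisfies `d(ω²) = 0`: every left-invariant Hermitian metric
on the Iwasawa manifold is balanced. Modeled in an abstract (noncommutative) algebra of
invariant forms, with anticommutation of 1-forms and the Leibniz rule as hypotheses. -/
theorem iwasawa_invariant_metrics_balanced
    {Λ : Type*} [Ring Λ] [Algebra ℂ Λ]
    (α β : Fin 3 → Λ) (d : Λ →ₗ[ℂ] Λ)
    (hanti_αα : ∀ i j, α i * α j = -(α j * α i))
    (hanti_ββ : ∀ i j, β i * β j = -(β j * β i))
    (hanti_αβ : ∀ i j, α i * β j = -(β j * α i))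
    (hdα0 : d (α 0) = 0) (hdα1 : d (α 1) = 0) (hdα2 : d (α 2) = α 0 * α 1)
    (hdβ0 : d (β 0) = 0) (hdβ1 : d (β 1) = 0) (hdβ2 : d (β 2) = β 0 * β 1)
    (hLeib1 : ∀ i j, d (α i * β j) = d (α i) * β j - α i * d (β j))
    (g : Matrix (Fin 3) (Fin 3) ℂ) (hg : g.PosDef)
    (ω : Λ)
    (hω : ω = Complex.I • ∑ j : Fin 3, ∑ k : Fin 3, g j k • (α j * β k))
    (hLeib2 : d (ω * ω) = d ω * ω + ω * d ω) :
    d (ω * ω) = 0 := by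
  -- squares of 1-forms vanish
  have sq : ∀ x : Λ, x * x = -(x * x) → x * x = 0 := by
    intro x h
    have h2 : (2 : ℂ) • (x * x) = 0 := by
      rw [two_smul]
      rw [add_eq_zero_iff_eq_neg]
      exact h
    have h3 : x * x = ((2 : ℂ)⁻¹ * 2) • (x * x) := by norm_num
    rw [h3, mul_smul, h2, smul_zero]
  have swapR : ∀ x y t : Λ, y * x = -(x * y) → y * (x * t) = -(x * (y * t)) := by
    intro x y t h
    rw [← mul_assoc, h, neg_mul, mul_assoc]
  have sqR : ∀ x t : Λ, x * x = 0 → x * (x * t) = 0 := by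
    intro x t h
    rw [← mul_assoc, h, zero_mul]
  have hαsq : ∀ i, α i * α i = 0 := fun i => sq _ (hanti_αα i i)
  have hβsq : ∀ i, β i * β i = 0 := fun i => sq _ (hanti_ββ i i)
  have hαsqR : ∀ i (t : Λ), α i * (α i * t) = 0 := fun i t => sqR _ _ (hαsq i)
  have hβsqR : ∀ i (t : Λ), β i * (β i * t) = 0 := fun i t => sqR _ _ (hβsq i)
  have hβα : ∀ i j, β i * α j = -(α j * β i) := by
    intro i j; rw [hanti_αβ j i, neg_neg]
  have hβαR : ∀ i j (t : Λ), β i * (α j * t) = -(α j * (β i * t)) :=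
    fun i j t => swapR _ _ _ (hβα i j)
  have a10 : α 1 * α 0 = -(α 0 * α 1) := hanti_αα 1 0
  have a20 : α 2 * α 0 = -(α 0 * α 2) := hanti_αα 2 0
  have a21 : α 2 * α 1 = -(α 1 * α 2) := hanti_αα 2 1
  have b10 : β 1 * β 0 = -(β 0 * β 1) := hanti_ββ 1 0
  have b20 : β 2 * β 0 = -(β 0 * β 2) := hanti_ββ 2 0
  have b21 : β 2 * β 1 = -(β 1 * β 2) := hanti_ββ 2 1
  have a10R : ∀ t : Λ, α 1 * (α 0 * t) = -(α 0 * (α 1 * t)) := fun t => swapR _ _ _ a10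
  have a20R : ∀ t : Λ, α 2 * (α 0 * t) = -(α 0 * (α 2 * t)) := fun t => swapR _ _ _ a20
  have a21R : ∀ t : Λ, α 2 * (α 1 * t) = -(α 1 * (α 2 * t)) := fun t => swapR _ _ _ a21
  have b10R : ∀ t : Λ, β 1 * (β 0 * t) = -(β 0 * (β 1 * t)) := fun t => swapR _ _ _ b10
  have b20R : ∀ t : Λ, β 2 * (β 0 * t) = -(β 0 * (β 2 * t)) := fun t => swapR _ _ _ b20
  have b21R : ∀ t : Λ, β 2 * (β 1 * t) = -(β 1 * (β 2 * t)) := fun t => swapR _ _ _ b21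
  rw [hLeib2, hω]
  simp only [Fin.sum_univ_three, map_smul, map_add, hLeib1, hdα0, hdα1, hdα2, hdβ0, hdβ1,
    hdβ2, zero_mul, mul_zero, sub_zero, zero_sub, zero_add, add_zero, smul_neg, smul_add,
    smul_sub, smul_zero, neg_zero, add_mul, mul_add, sub_mul, mul_sub, neg_mul, mul_neg,
    neg_neg, neg_add_rev, smul_mul_assoc, mul_smul_comm, smul_smul, mul_assoc,
    hαsq, hβsq, hαsqR, hβsqR, hβα, hβαR, a10, a20, a21, b10, b20, b21,
    a10R, a20R, a21R, b10R, b20R, b21R]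
  module
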